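/- arXiv:math/0101220 — 2 statements merged into one kernel-verified Lean document; each statement's English description precedes it below -/
import Mathlib

section
/- Let Γ be a finite simple graph with vertex set V, let G_p be groups for p ∈ V, and let Γ' be a full subgraph of Γ on a subset V' ⊆ V. Then the natural homomorphism from the graph product G_{Γ'} (of the groups G_p, p ∈ V') to the graph product G_Γ is injective. -/
open Monoid

/-- The relator subgroup of the graph product: the normal closure of the commutators
`[of g, of g']` for `g ∈ G p`, `g' ∈ G q` with `{p,q}` an edge of `Γ`. -/
def graphProductRels {V : Type*} (Γ : SimpleGraph V) (G : V → Type*)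
    [∀ v, Group (G v)] : Subgroup (CoprodI G) :=
  Subgroup.normalClosure
    {x : CoprodI G | ∃ (p q : V) (_ : Γ.Adj p q) (g : G p) (g' : G q),
      x = (CoprodI.of g)⁻¹ * (CoprodI.of g')⁻¹ * CoprodI.of g * CoprodI.of g'}

/-- The graph product of the groups `G v` over the graph `Γ`. -/
def GraphProduct {V : Type*} (Γ : SimpleGraph V) (G : V → Type*)
    [∀ v, Group (G v)] : Type _ :=
  CoprodI G ⧸ graphProductRels Γ G

instance {V : Type*} (Γ : SimpleGraph V) (G : V → Type*) [∀ v, Group (G v)] :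
    (graphProductRels Γ G).Normal :=
  Subgroup.normalClosure_normal

instance {V : Type*} (Γ : SimpleGraph V) (G : V → Type*) [∀ v, Group (G v)] :
    Group (GraphProduct Γ G) :=
  QuotientGroup.Quotient.group _

/-- The natural homomorphism from the graph product over a full (induced) subgraph
to the graph product over the whole graph is injective. -/
theorem graphProduct_induce_injective {V : Type*} [Fintype V] (Γ : SimpleGraph V)
    (G : V → Type*) [∀ v, Group (G v)] (V' : Set V) :
    ∃ f : GraphProduct (Γ.induce V') (fun v : V' => G v) →* GraphProduct Γ G,
      (∀ (v : V') (g : G v),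
        f (QuotientGroup.mk (CoprodI.of (M := fun v : V' => G v) g)) =
          QuotientGroup.mk (CoprodI.of (M := G) g)) ∧
      Function.Injective f := by
  classical
  -- forward map
  set φ : CoprodI (fun v : V' => G v) →* GraphProduct Γ G :=
    CoprodI.lift (fun v : V' =>
      (QuotientGroup.mk' (graphProductRels Γ G)).comp (CoprodI.of (M := G) (i := (v : V))))
    with hφ
  have hφker : graphProductRels (Γ.induce V') (fun v : V' => G v) ≤ φ.ker := by
    apply Subgroup.normalClosure_le_normal
    rintro x ⟨p, q, hadj, g, g', rfl⟩
    have : Γ.Adj p q := hadj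
    simp only [SetLike.mem_coe, MonoidHom.mem_ker, map_mul, map_inv, hφ,
      CoprodI.lift_of, MonoidHom.comp_apply, QuotientGroup.mk'_apply]
    show QuotientGroup.mk ((CoprodI.of g)⁻¹ * (CoprodI.of g')⁻¹ * CoprodI.of g * CoprodI.of g') = 1
    refine (QuotientGroup.eq_one_iff _).mpr ?_
    exact Subgroup.subset_normalClosure ⟨p, q, this, g, g', rfl⟩
  set f : GraphProduct (Γ.induce V') (fun v : V' => G v) →* GraphProduct Γ G :=
    QuotientGroup.lift _ φ hφker with hf
  -- retraction
  set ρ : ∀ v : V, G v →* GraphProduct (Γ.induce V') (fun v : V' => G v) :=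
    fun v =>
      if h : v ∈ V' then
        (QuotientGroup.mk' (graphProductRels (Γ.induce V') (fun v : V' => G v))).comp
          (CoprodI.of (M := fun v : V' => G v) (i := ⟨v, h⟩))
      else 1
    with hρ
  set ψ : CoprodI G →* GraphProduct (Γ.induce V') (fun v : V' => G v) :=
    CoprodI.lift ρ with hψ
  have hψker : graphProductRels Γ G ≤ ψ.ker := by
    apply Subgroup.normalClosure_le_normal
    rintro x ⟨p, q, hadj, g, g', rfl⟩
    simp only [SetLike.mem_coe, MonoidHom.mem_ker, map_mul, map_inv, hψ, CoprodI.lift_of]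
    by_cases hp : p ∈ V'
    · by_cases hq : q ∈ V'
      · simp only [hρ]
        erw [dif_pos hp, dif_pos hq]
        show QuotientGroup.mk ((CoprodI.of (M := fun v : V' => G v) (i := ⟨p, hp⟩) g)⁻¹ *
          (CoprodI.of (M := fun v : V' => G v) (i := ⟨q, hq⟩) g')⁻¹ *
          CoprodI.of (M := fun v : V' => G v) (i := ⟨p, hp⟩) g *
          CoprodI.of (M := fun v : V' => G v) (i := ⟨q, hq⟩) g') = 1
        refine (QuotientGroup.eq_one_iff _).mpr ?_
        refine Subgroup.subset_normalClosure ⟨⟨p, hp⟩, ⟨q, hq⟩, ?_, g, g', rfl⟩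
        exact hadj
      · simp only [hρ]
        erw [dif_neg hq]
        simp
    · simp only [hρ]
      erw [dif_neg hp]
      simp
  set r : GraphProduct Γ G →* GraphProduct (Γ.induce V') (fun v : V' => G v) :=
    QuotientGroup.lift _ ψ hψker with hr
  refine ⟨f, fun v g => rfl, ?_⟩
  have hleft : ∀ x, r (f x) = x := by
    have : (r.comp f) = MonoidHom.id _ := by
      apply QuotientGroup.monoidHom_ext
      apply CoprodI.ext_hom
      intro i
      ext g
      show ρ (i : V) g = QuotientGroup.mk (CoprodI.of (M := fun v : V' => G v) g)
      rw [hρ]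
      simp only [dif_pos i.2]
      erw [dif_pos i.2]
      rfl
    intro x
    exact DFunLike.congr_fun this x
  exact Function.LeftInverse.injective hleft
end

section
/- Let Γ be a finite simple graph and suppose the vertices p, q of Γ are not joined by an edge. Let Γ₀, Γ₁, Γ₂ be the full subgraphs of Γ on the complements of {p,q}, {p}, {q} respectively. Then the graph product G_Γ is isomorphic to the amalgamated free product (pushout of groups) G_{Γ₁} *_{G_{Γ₀}} G_{Γ₂}, where the maps G_{Γ₀} → G_{Γ₁} and G_{Γ₀} → G_{Γ₂} are the natural inclusions. -/
open Monoid

universe u_cond in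
instance condGroup {A B : Type u_cond} [Group A] [Group B] : ∀ b : Bool, Group (cond b A B)
  | true => ‹Group A›
  | false => ‹Group B›


section GPAux

variable {V : Type*} (Γ : SimpleGraph V) (G : V → Type*) [∀ v, Group (G v)]
variable {K : Type*} [Group K]

/-- Natural map from a factor into the graph product. -/
def GPof (v : V) : G v →* GraphProduct Γ G :=
  (QuotientGroup.mk' (graphProductRels Γ G)).comp CoprodI.of

theorem GPof_apply (v : V) (g : G v) :
    GPof Γ G v g = QuotientGroup.mk (CoprodI.of g) := rfl

variable {Γ G}

theorem GPof_commute {a b : V} (h : Γ.Adj a b) (g : G a) (g' : G b) :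
    Commute (GPof Γ G a g) (GPof Γ G b g') := by
  show GPof Γ G a g * GPof Γ G b g' = GPof Γ G b g' * GPof Γ G a g
  simp only [GPof_apply]
  show QuotientGroup.mk (CoprodI.of g * CoprodI.of g') =
    QuotientGroup.mk (CoprodI.of g' * CoprodI.of g)
  rw [QuotientGroup.eq]
  apply Subgroup.subset_normalClosure
  refine ⟨b, a, h.symm, g', g, ?_⟩
  group

/-- Lift a family of homomorphisms commuting along edges to a homomorphism out of the
graph product. -/
def GPlift (ι : ∀ v, G v →* K)
    (hcomm : ∀ a b, Γ.Adj a b → ∀ (g : G a) (g' : G b), Commute (ι a g) (ι b g')) :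
    GraphProduct Γ G →* K :=
  QuotientGroup.lift _ (CoprodI.lift ι) <| by
    intro x hx
    refine Subgroup.normalClosure_le_normal ?_ hx
    rintro y ⟨a, b, hab, g, g', rfl⟩
    simp only [SetLike.mem_coe, MonoidHom.mem_ker, map_mul, map_inv, CoprodI.lift_of]
    rw [(hcomm a b hab g g').inv_inv.eq]
    group

@[simp]
theorem GPlift_of (ι : ∀ v, G v →* K)
    (hcomm : ∀ a b, Γ.Adj a b → ∀ (g : G a) (g' : G b), Commute (ι a g) (ι b g'))
    (v : V) (g : G v) : GPlift ι hcomm (GPof Γ G v g) = ι v g := by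
  show CoprodI.lift ι (CoprodI.of g) = ι v g
  simp

theorem GPhom_ext {f g : GraphProduct Γ G →* K}
    (h : ∀ v, f.comp (GPof Γ G v) = g.comp (GPof Γ G v)) : f = g := by
  apply QuotientGroup.monoidHom_ext
  apply CoprodI.ext_hom
  intro v
  ext x
  exact DFunLike.congr_fun (h v) x

end GPAux

set_option maxHeartbeats 2000000 in
/-- If vertices `p, q` of `Γ` are not adjacent, then the graph product over `Γ` is the
pushout (amalgamated free product) of the graph products over the full subgraphs on the
complements of `{p}` and `{q}`, amalgamated over the full subgraph on the complement of
`{p,q}`, along the natural inclusion maps. -/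
theorem graphProduct_pushout {V : Type*} [Fintype V] (Γ : SimpleGraph V)
    (G : V → Type*) [∀ v, Group (G v)] (p q : V) (hne : p ≠ q) (hadj : ¬ Γ.Adj p q)
    (f₁ : GraphProduct (Γ.induce {v : V | v ≠ p ∧ v ≠ q})
            (fun v : {v : V | v ≠ p ∧ v ≠ q} => G v) →*
          GraphProduct (Γ.induce {v : V | v ≠ p}) (fun v : {v : V | v ≠ p} => G v))
    (hf₁ : ∀ (v : {v : V | v ≠ p ∧ v ≠ q}) (g : G v),
      f₁ (QuotientGroup.mk (CoprodI.of (M := fun v : {v : V | v ≠ p ∧ v ≠ q} => G v) g)) =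
        QuotientGroup.mk
          (CoprodI.of (M := fun v : {v : V | v ≠ p} => G v) (i := ⟨v.1, v.2.1⟩) g))
    (f₂ : GraphProduct (Γ.induce {v : V | v ≠ p ∧ v ≠ q})
            (fun v : {v : V | v ≠ p ∧ v ≠ q} => G v) →*
          GraphProduct (Γ.induce {v : V | v ≠ q}) (fun v : {v : V | v ≠ q} => G v))
    (hf₂ : ∀ (v : {v : V | v ≠ p ∧ v ≠ q}) (g : G v),
      f₂ (QuotientGroup.mk (CoprodI.of (M := fun v : {v : V | v ≠ p ∧ v ≠ q} => G v) g)) =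
        QuotientGroup.mk
          (CoprodI.of (M := fun v : {v : V | v ≠ q} => G v) (i := ⟨v.1, v.2.2⟩) g)) :
    Nonempty (GraphProduct Γ G ≃*
      Monoid.PushoutI (G := fun b : Bool =>
          cond b (GraphProduct (Γ.induce {v : V | v ≠ p}) (fun v : {v : V | v ≠ p} => G v))
            (GraphProduct (Γ.induce {v : V | v ≠ q}) (fun v : {v : V | v ≠ q} => G v)))
        (fun b : Bool => match b with
          | true => f₁
          | false => f₂)) := by
  classical
  let C := GraphProduct (Γ.induce {v : V | v ≠ p ∧ v ≠ q})
    (fun v : {v : V | v ≠ p ∧ v ≠ q} => G v)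
  let A := GraphProduct (Γ.induce {v : V | v ≠ p}) (fun v : {v : V | v ≠ p} => G v)
  let B := GraphProduct (Γ.induce {v : V | v ≠ q}) (fun v : {v : V | v ≠ q} => G v)
  let φ : ∀ b : Bool, C →* cond b A B := fun b => match b with
    | true => f₁
    | false => f₂
  have hkey : ∀ (v : V) (hvp : v ≠ p) (hvq : v ≠ q) (g : G v),
      Monoid.PushoutI.of (φ := φ) true
        (GPof (Γ.induce {v : V | v ≠ p}) (fun v : {v : V | v ≠ p} => G v) ⟨v, hvp⟩ g) =
      Monoid.PushoutI.of (φ := φ) false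
        (GPof (Γ.induce {v : V | v ≠ q}) (fun v : {v : V | v ≠ q} => G v) ⟨v, hvq⟩ g) := by
    intro v hvp hvq g
    have h1 := hf₁ ⟨v, ⟨hvp, hvq⟩⟩ g
    have h2 := hf₂ ⟨v, ⟨hvp, hvq⟩⟩ g
    rw [GPof_apply, GPof_apply, ← h1, ← h2]
    exact (Monoid.PushoutI.of_apply_eq_base φ true _).trans
      (Monoid.PushoutI.of_apply_eq_base φ false _).symm
  let ι : ∀ v : V, G v →* Monoid.PushoutI φ := fun v =>
    if h : v = p then
      (Monoid.PushoutI.of (φ := φ) false).comp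
        (GPof (Γ.induce {v : V | v ≠ q}) (fun v : {v : V | v ≠ q} => G v)
          ⟨v, fun hq => hne (h.symm.trans hq)⟩)
    else
      (Monoid.PushoutI.of (φ := φ) true).comp
        (GPof (Γ.induce {v : V | v ≠ p}) (fun v : {v : V | v ≠ p} => G v) ⟨v, h⟩)
  have hcomm : ∀ a b, Γ.Adj a b → ∀ (g : G a) (g' : G b), Commute (ι a g) (ι b g') := by
    intro a b hab g g'
    by_cases hap : a = p
    · subst hap
      have hbq : b ≠ q := fun h => hadj (h ▸ hab)
      have hbp : b ≠ a := hab.ne'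
      have e1 : ι b g' = (Monoid.PushoutI.of (φ := φ) false).comp
          (GPof (Γ.induce {v : V | v ≠ q}) (fun v : {v : V | v ≠ q} => G v) ⟨b, hbq⟩) g' := by
        simp only [ι, dif_neg hbp, MonoidHom.comp_apply]
        exact hkey b hbp hbq g'
      rw [e1]
      simp only [ι, dif_pos rfl, MonoidHom.comp_apply]
      exact (GPof_commute (Γ := Γ.induce {v : V | v ≠ q})
        (G := fun v : {v : V | v ≠ q} => G v) (a := ⟨a, fun hq => hne hq⟩) (b := ⟨b, hbq⟩)
        hab g g').map (Monoid.PushoutI.of (φ := φ) false)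
    · by_cases hbp : b = p
      · subst hbp
        have haq : a ≠ q := fun h => hadj (Γ.adj_symm (h ▸ hab))
        have e1 : ι a g = (Monoid.PushoutI.of (φ := φ) false).comp
            (GPof (Γ.induce {v : V | v ≠ q}) (fun v : {v : V | v ≠ q} => G v) ⟨a, haq⟩) g := by
          simp only [ι, dif_neg hap, MonoidHom.comp_apply]
          exact hkey a hap haq g
        rw [e1]
        simp only [ι, dif_pos rfl, MonoidHom.comp_apply]
        exact (GPof_commute (Γ := Γ.induce {v : V | v ≠ q})
          (G := fun v : {v : V | v ≠ q} => G v) (a := ⟨a, haq⟩) (b := ⟨b, fun hq => hne hq⟩)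
          hab g g').map (Monoid.PushoutI.of (φ := φ) false)
      · simp only [ι, dif_neg hap, dif_neg hbp, MonoidHom.comp_apply]
        exact (GPof_commute (Γ := Γ.induce {v : V | v ≠ p})
          (G := fun v : {v : V | v ≠ p} => G v) (a := ⟨a, hap⟩) (b := ⟨b, hbp⟩)
          hab g g').map (Monoid.PushoutI.of (φ := φ) true)
  let F : GraphProduct Γ G →* Monoid.PushoutI φ := GPlift ι hcomm
  have hcA : ∀ (a b : {v : V | v ≠ p}), (Γ.induce {v : V | v ≠ p}).Adj a b →
      ∀ (g : G a.1) (g' : G b.1), Commute (GPof Γ G a.1 g) (GPof Γ G b.1 g') :=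
    fun a b hab g g' => GPof_commute (Γ := Γ) (G := G) (show Γ.Adj a.1 b.1 from hab) g g'
  have hcB : ∀ (a b : {v : V | v ≠ q}), (Γ.induce {v : V | v ≠ q}).Adj a b →
      ∀ (g : G a.1) (g' : G b.1), Commute (GPof Γ G a.1 g) (GPof Γ G b.1 g') :=
    fun a b hab g g' => GPof_commute (Γ := Γ) (G := G) (show Γ.Adj a.1 b.1 from hab) g g'
  have hcC : ∀ (a b : {v : V | v ≠ p ∧ v ≠ q}), (Γ.induce {v : V | v ≠ p ∧ v ≠ q}).Adj a b →
      ∀ (g : G a.1) (g' : G b.1), Commute (GPof Γ G a.1 g) (GPof Γ G b.1 g') :=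
    fun a b hab g g' => GPof_commute (Γ := Γ) (G := G) (show Γ.Adj a.1 b.1 from hab) g g'
  let k₁ : A →* GraphProduct Γ G := GPlift (fun v => GPof Γ G v.1) hcA
  let k₂ : B →* GraphProduct Γ G := GPlift (fun v => GPof Γ G v.1) hcB
  let kH : C →* GraphProduct Γ G := GPlift (fun v => GPof Γ G v.1) hcC
  let k : ∀ b : Bool, cond b A B →* GraphProduct Γ G := fun b => match b with
    | true => k₁
    | false => k₂
  have hk : ∀ b : Bool, (k b).comp (φ b) = kH := by
    intro b
    cases b with
    | true =>
      apply GPhom_ext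
      intro v
      ext g
      show k₁ (f₁ (GPof _ _ v g)) = kH (GPof _ _ v g)
      refine Eq.trans ?_ (GPlift_of (fun v : {v : V | v ≠ p ∧ v ≠ q} => GPof Γ G v.1) hcC v g).symm
      rw [GPof_apply, hf₁ v g]
      exact GPlift_of (Γ := Γ.induce {v : V | v ≠ p})
        (fun v : {v : V | v ≠ p} => GPof Γ G v.1) hcA ⟨v.1, v.2.1⟩ g
    | false =>
      apply GPhom_ext
      intro v
      ext g
      show k₂ (f₂ (GPof _ _ v g)) = kH (GPof _ _ v g)
      refine Eq.trans ?_ (GPlift_of (fun v : {v : V | v ≠ p ∧ v ≠ q} => GPof Γ G v.1) hcC v g).symm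
      rw [GPof_apply, hf₂ v g]
      exact GPlift_of (Γ := Γ.induce {v : V | v ≠ q})
        (fun v : {v : V | v ≠ q} => GPof Γ G v.1) hcB ⟨v.1, v.2.2⟩ g
  let Bw : Monoid.PushoutI φ →* GraphProduct Γ G := Monoid.PushoutI.lift k kH hk
  have h1 : Bw.comp F = MonoidHom.id _ := by
    apply GPhom_ext
    intro v
    ext g
    show Bw (GPlift ι hcomm (GPof Γ G v g)) = GPof Γ G v g
    rw [GPlift_of]
    by_cases h : v = p
    · have e : ι v g = (Monoid.PushoutI.of (φ := φ) false)
          (GPof (Γ.induce {v : V | v ≠ q}) (fun v : {v : V | v ≠ q} => G v)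
            ⟨v, fun hq => hne (h.symm.trans hq)⟩ g) := by
        simp only [ι, dif_pos h, MonoidHom.comp_apply]
      rw [e]
      exact (Monoid.PushoutI.lift_of k kH hk _).trans
        (GPlift_of (fun v : {v : V | v ≠ q} => GPof Γ G v.1) hcB
          ⟨v, fun hq => hne (h.symm.trans hq)⟩ g)
    · have e : ι v g = (Monoid.PushoutI.of (φ := φ) true)
          (GPof (Γ.induce {v : V | v ≠ p}) (fun v : {v : V | v ≠ p} => G v) ⟨v, h⟩ g) := by
        simp only [ι, dif_neg h, MonoidHom.comp_apply]
      rw [e]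
      exact (Monoid.PushoutI.lift_of k kH hk _).trans
        (GPlift_of (fun v : {v : V | v ≠ p} => GPof Γ G v.1) hcA ⟨v, h⟩ g)
  have h2 : F.comp Bw = MonoidHom.id _ := by
    apply Monoid.PushoutI.hom_ext_nonempty
    intro b
    cases b with
    | true =>
      apply GPhom_ext
      intro v
      ext g
      show F (Bw ((Monoid.PushoutI.of (φ := φ) true) (GPof _ _ v g))) =
        (Monoid.PushoutI.of (φ := φ) true) (GPof _ _ v g)
      have e1 : Bw ((Monoid.PushoutI.of (φ := φ) true)
          (GPof (Γ.induce {v : V | v ≠ p}) (fun v : {v : V | v ≠ p} => G v) v g)) =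
          GPof Γ G v.1 g :=
        (Monoid.PushoutI.lift_of k kH hk _).trans
          (GPlift_of (fun v : {v : V | v ≠ p} => GPof Γ G v.1) hcA v g)
      rw [e1]
      have e2 : F (GPof Γ G v.1 g) = ι v.1 g := GPlift_of ι hcomm v.1 g
      rw [e2]
      simp only [ι, dif_neg (show v.1 ≠ p from v.2), MonoidHom.comp_apply]
    | false =>
      apply GPhom_ext
      intro v
      ext g
      show F (Bw ((Monoid.PushoutI.of (φ := φ) false) (GPof _ _ v g))) =
        (Monoid.PushoutI.of (φ := φ) false) (GPof _ _ v g)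
      have e1 : Bw ((Monoid.PushoutI.of (φ := φ) false)
          (GPof (Γ.induce {v : V | v ≠ q}) (fun v : {v : V | v ≠ q} => G v) v g)) =
          GPof Γ G v.1 g :=
        (Monoid.PushoutI.lift_of k kH hk _).trans
          (GPlift_of (fun v : {v : V | v ≠ q} => GPof Γ G v.1) hcB v g)
      rw [e1]
      have e2 : F (GPof Γ G v.1 g) = ι v.1 g := GPlift_of ι hcomm v.1 g
      rw [e2]
      by_cases h : v.1 = p
      · simp only [ι, dif_pos h, MonoidHom.comp_apply]
      · simp only [ι, dif_neg h, MonoidHom.comp_apply]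
        exact hkey v.1 h v.2 g
  exact ⟨MonoidHom.toMulEquiv F Bw h1 h2⟩
end
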